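/- arXiv:1410.0419 — 3 statements merged into one kernel-verified Lean document; each statement's English description precedes it below -/
import Mathlib

section
/- If R₁, R₂ : ℝ → ℂ solve the radial Chandrasekhar system and both |R₁|² and |R₂|² are integrable on ℝ, then |R₁(r)| = |R₂(r)| for all r. -/
open MeasureTheory

lemma sq_abs_hasDeriv {R : ℝ → ℂ} {d : ℂ} {r : ℝ} (h : HasDerivAt R d r) :
    HasDerivAt (fun r => ‖R r‖ ^ 2)
      (2 * ((R r).re * d.re + (R r).im * d.im)) r := by
  have hre : HasDerivAt (fun r => (R r).re) d.re r :=
    Complex.reCLM.hasFDerivAt.comp_hasDerivAt r h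
  have him : HasDerivAt (fun r => (R r).im) d.im r :=
    Complex.imCLM.hasFDerivAt.comp_hasDerivAt r h
  have : HasDerivAt (fun t => (R t).re * (R t).re + (R t).im * (R t).im)
      (d.re * (R r).re + (R r).re * d.re + (d.im * (R r).im + (R r).im * d.im)) r :=
    (hre.mul hre).add (him.mul him)
  convert this using 1
  · funext t
    rw [← Complex.normSq_apply, Complex.sq_norm]
  · ring

/-- If `R₁, R₂` solve the radial Chandrasekhar system and `|R₁|², |R₂|²` are
integrable on `ℝ`, then `|R₁(r)| = |R₂(r)|` for all `r`. -/
theorem radial_moduli_equal_of_L2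
    (E lam a kappa gamma m : ℝ) (ha : 0 < a) (R₁ R₂ : ℝ → ℂ)
    (h₁ : ∀ r : ℝ, HasDerivAt R₁
      (Complex.I * ((E : ℂ) - (((a * kappa - gamma * r) / (r ^ 2 + a ^ 2) : ℝ) : ℂ)) * R₁ r
        - (Complex.I * (m : ℂ) * (r : ℂ) - (lam : ℂ)) * R₂ r
          / ((Real.sqrt (r ^ 2 + a ^ 2) : ℝ) : ℂ)) r)
    (h₂ : ∀ r : ℝ, HasDerivAt R₂
      (-(Complex.I * ((E : ℂ) - (((a * kappa - gamma * r) / (r ^ 2 + a ^ 2) : ℝ) : ℂ))) * R₂ r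
        + (Complex.I * (m : ℂ) * (r : ℂ) + (lam : ℂ)) * R₁ r
          / ((Real.sqrt (r ^ 2 + a ^ 2) : ℝ) : ℂ)) r)
    (hL₁ : Integrable (fun r : ℝ => ‖R₁ r‖ ^ 2))
    (hL₂ : Integrable (fun r : ℝ => ‖R₂ r‖ ^ 2)) :
    ∀ r : ℝ, ‖R₁ r‖ = ‖R₂ r‖ := by
  set g : ℝ → ℝ := fun r => ‖R₁ r‖ ^ 2 - ‖R₂ r‖ ^ 2 with hg
  have hder : ∀ r, HasDerivAt g 0 r := by
    intro r
    have H : HasDerivAt (fun t => ‖R₁ t‖ ^ 2 - ‖R₂ t‖ ^ 2) _ r := (sq_abs_hasDeriv (h₁ r)).sub (sq_abs_hasDeriv (h₂ r))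
    convert H using 1
    simp [Complex.mul_re, Complex.mul_im, Complex.div_ofReal_re, Complex.div_ofReal_im,
      ← Complex.ofReal_pow, ← Complex.ofReal_inv, ← Complex.ofReal_mul, ← Complex.ofReal_add,
      ← Complex.ofReal_sub]
    ring
  have hconst : ∀ r, g r = g 0 := fun r =>
    is_const_of_deriv_eq_zero (fun x => (hder x).differentiableAt)
      (fun x => (hder x).deriv) r 0
  have hint : Integrable g := hL₁.sub hL₂
  have hzero : g 0 = 0 := by
    have : Integrable (fun _ : ℝ => g 0) := by
      have : g = fun _ => g 0 := funext hconst
      rwa [this] at hint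
    rcases (integrable_const_iff).mp this with h | h
    · exact h
    · have := h.measure_univ_lt_top
      simp [Real.volume_univ] at this
  intro r
  have hr : ‖R₁ r‖ ^ 2 = ‖R₂ r‖ ^ 2 := by
    have := hconst r
    rw [hzero] at this
    simpa [hg, sub_eq_zero] using this
  have h1 := norm_nonneg (R₁ r)
  have h2 := norm_nonneg (R₂ r)
  nlinarith [hr, h1, h2]
end

section
/- Uniqueness of the angular connector eigenvalue: Fix a ∈ (0,1/2), E ∈ [0,1], κ = 1/2. Suppose Θ, Θ' : (0,π) → (-π, 0) are C¹ solutions of dΘ/dθ = -2a cosθ cosΘ + 2(aE sinθ - (1/2)cscθ) sinΘ + 2λ and the same equation with λ' in place of λ respectively, both with boundary behavior Θ(0⁺) = 0, Θ(π⁻) = -π and one-sided derivatives (λ - a)/(κ + 1/2) at both endpoints (resp. with λ'). If λ' > λ then Θ'(θ) > Θ(θ) for θ near 0 and Θ'(θ) < Θ(θ) for θ near π, yet at any first crossing point θ* with Θ'(θ*) = Θ(θ*) one has (Θ' - Θ)'(θ*) = 2(λ' - λ) > 0, a contradiction; hence λ' = λ. -/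
open Real Filter

section AuxComparison
open Set

lemma aux_comparison (a lam lam' : ℝ) (hlt : lam < lam') (F : ℝ → ℝ → ℝ) (f g : ℝ → ℝ)
    (hode : ∀ θ ∈ Set.Ioo (0 : ℝ) π, HasDerivAt f (F θ (f θ) + 2*lam) θ)
    (hode' : ∀ θ ∈ Set.Ioo (0 : ℝ) π, HasDerivAt g (F θ (g θ) + 2*lam') θ)
    (hleft : Tendsto (fun θ : ℝ => f θ / θ) (nhdsWithin 0 (Set.Ioi 0)) (nhds (lam - a)))
    (hleft' : Tendsto (fun θ : ℝ => g θ / θ) (nhdsWithin 0 (Set.Ioi 0)) (nhds (lam' - a)))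
    (hright : Tendsto (fun θ : ℝ => (f θ + π) / (θ - π))
      (nhdsWithin π (Set.Iio π)) (nhds (lam - a)))
    (hright' : Tendsto (fun θ : ℝ => (g θ + π) / (θ - π))
      (nhdsWithin π (Set.Iio π)) (nhds (lam' - a))) : False := by
  set D : ℝ → ℝ := fun θ => g θ - f θ with hD
  -- find c near 0 with D c > 0
  have h0 : Tendsto (fun θ : ℝ => g θ / θ - f θ / θ) (nhdsWithin 0 (Set.Ioi 0))
      (nhds ((lam' - a) - (lam - a))) := hleft'.sub hleft
  have hpos : ∀ᶠ θ in nhdsWithin 0 (Set.Ioi 0), 0 < g θ / θ - f θ / θ :=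
    h0.eventually (eventually_gt_nhds (by linarith))
  have hπ : ∀ᶠ θ in nhdsWithin 0 (Set.Ioi 0), θ < π :=
    (eventually_lt_nhds pi_pos).filter_mono nhdsWithin_le_nhds
  obtain ⟨c, hc1, hc2, hc3⟩ := (hpos.and (hπ.and eventually_mem_nhdsWithin)).exists
  have hc0 : (0:ℝ) < c := hc3
  have hDc : 0 < D c := by
    rw [← sub_div] at hc1
    rcases div_pos_iff.1 hc1 with ⟨h, _⟩ | ⟨_, h⟩
    · exact h
    · linarith
  -- find d near π with c < d and D d < 0
  have h0' : Tendsto (fun θ : ℝ => (g θ + π) / (θ - π) - (f θ + π) / (θ - π))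
      (nhdsWithin π (Set.Iio π)) (nhds ((lam' - a) - (lam - a))) := hright'.sub hright
  have hpos' : ∀ᶠ θ in nhdsWithin π (Set.Iio π),
      0 < (g θ + π) / (θ - π) - (f θ + π) / (θ - π) :=
    h0'.eventually (eventually_gt_nhds (by linarith))
  have hgtc : ∀ᶠ θ in nhdsWithin π (Set.Iio π), c < θ :=
    (eventually_gt_nhds hc2).filter_mono nhdsWithin_le_nhds
  obtain ⟨d, hd1, hd2, hd3⟩ := (hpos'.and (hgtc.and eventually_mem_nhdsWithin)).exists
  have hdπ : d < π := hd3
  have hDd : D d < 0 := by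
    rw [div_sub_div_same] at hd1
    have he : g d + π - (f d + π) = g d - f d := by ring
    rw [he] at hd1
    rcases div_pos_iff.1 hd1 with ⟨_, h⟩ | ⟨h, _⟩
    · linarith
    · exact h
  have hsub : Set.Icc c d ⊆ Set.Ioo (0:ℝ) π :=
    fun x hx => ⟨lt_of_lt_of_le hc0 hx.1, lt_of_le_of_lt hx.2 hdπ⟩
  have hcont : ContinuousOn D (Set.Icc c d) := fun x hx =>
    (((hode' x (hsub hx)).sub (hode x (hsub hx))).continuousAt).continuousWithinAt
  have hivt : (0:ℝ) ∈ D '' Set.Icc c d :=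
    intermediate_value_Icc' hd2.le hcont ⟨hDd.le, hDc.le⟩
  obtain ⟨z, hz, hz0⟩ := hivt
  set S : Set ℝ := Set.Icc c d ∩ D ⁻¹' {0} with hS
  have hSclosed : IsClosed S := hcont.preimage_isClosed_of_isClosed isClosed_Icc isClosed_singleton
  have hSne : S.Nonempty := ⟨z, hz, hz0⟩
  have hSbdd : BddBelow S := ⟨c, fun x hx => hx.1.1⟩
  set t := sInf S with ht
  have htS : t ∈ S := hSclosed.csInf_mem hSne hSbdd
  have htD : D t = 0 := htS.2
  have hct : c < t := by
    rcases lt_or_eq_of_le htS.1.1 with h | h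
    · exact h
    · exfalso; rw [← h] at htD; linarith
  have hnonneg : ∀ x ∈ Set.Ioo c t, 0 ≤ D x := by
    intro x hx
    by_contra h
    push_neg at h
    have hxcd : Set.Icc c x ⊆ Set.Icc c d :=
      Set.Icc_subset_Icc le_rfl (hx.2.le.trans htS.1.2)
    have : (0:ℝ) ∈ D '' Set.Icc c x :=
      intermediate_value_Icc' hx.1.le (hcont.mono hxcd) ⟨h.le, hDc.le⟩
    obtain ⟨z', hz', hz'0⟩ := this
    have h1 : t ≤ z' := csInf_le hSbdd ⟨hxcd hz', hz'0⟩
    have h2 : z' ≤ x := hz'.2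
    linarith [hx.2]
  have htmem : t ∈ Set.Ioo (0:ℝ) π := hsub ⟨htS.1.1, htS.1.2⟩
  have heq : g t = f t := sub_eq_zero.mp htD
  have hderiv : HasDerivAt D (2*(lam' - lam)) t := by
    have h1 := hode' t htmem
    rw [heq] at h1
    have h2 := h1.sub (hode t htmem)
    convert h2 using 1
    · rfl
    · rfl
    · rfl
    · ring
  rw [hasDerivAt_iff_tendsto_slope] at hderiv
  have hmono : nhdsWithin t (Set.Iio t) ≤ nhdsWithin t {t}ᶜ :=
    nhdsWithin_mono _ fun x hx => ne_of_lt hx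
  have hten := hderiv.mono_left hmono
  have hev : ∀ᶠ x in nhdsWithin t (Set.Iio t), slope D t x ≤ 0 := by
    filter_upwards [self_mem_nhdsWithin,
      (eventually_gt_nhds hct).filter_mono nhdsWithin_le_nhds] with x hx1 hx2
    have hDx : 0 ≤ D x := hnonneg x ⟨hx2, hx1⟩
    rw [slope_def_field, htD, sub_zero]
    exact div_nonpos_of_nonneg_of_nonpos hDx (by simp only [Set.mem_Iio] at hx1; linarith)
  have hle := le_of_tendsto hten hev
  linarith

end AuxComparison

/-- Uniqueness of the angular connector eigenvalue (κ = 1/2, m = 1): if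
`Θ, Θ' : (0,π) → (-π,0)` are `C¹` solutions of
`dΘ/dθ = -2a cosθ cosΘ + 2(aE sinθ - (1/2)/sinθ) sinΘ + 2λ` (resp. with `λ'`),
both with boundary behavior `Θ(0⁺) = 0`, `Θ(π⁻) = -π` and one-sided slope `λ - a`
(resp. `λ' - a`) at both endpoints, then `λ' = λ`. -/
theorem angular_connector_eigenvalue_unique
    (a E lam lam' : ℝ) (ha : a ∈ Set.Ioo (0 : ℝ) (1/2)) (hE : E ∈ Set.Icc (0 : ℝ) 1)
    (Θ Θ' : ℝ → ℝ)
    (hrange : ∀ θ ∈ Set.Ioo (0 : ℝ) π, Θ θ ∈ Set.Ioo (-π) 0)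
    (hrange' : ∀ θ ∈ Set.Ioo (0 : ℝ) π, Θ' θ ∈ Set.Ioo (-π) 0)
    (hode : ∀ θ ∈ Set.Ioo (0 : ℝ) π, HasDerivAt Θ
      (-2*a*Real.cos θ*Real.cos (Θ θ)
        + 2*(a*E*Real.sin θ - (1/2)/Real.sin θ)*Real.sin (Θ θ) + 2*lam) θ)
    (hode' : ∀ θ ∈ Set.Ioo (0 : ℝ) π, HasDerivAt Θ'
      (-2*a*Real.cos θ*Real.cos (Θ' θ)
        + 2*(a*E*Real.sin θ - (1/2)/Real.sin θ)*Real.sin (Θ' θ) + 2*lam') θ)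
    (hleft : Tendsto (fun θ : ℝ => Θ θ / θ) (nhdsWithin 0 (Set.Ioi 0)) (nhds (lam - a)))
    (hleft' : Tendsto (fun θ : ℝ => Θ' θ / θ) (nhdsWithin 0 (Set.Ioi 0)) (nhds (lam' - a)))
    (hright : Tendsto (fun θ : ℝ => (Θ θ + π) / (θ - π))
      (nhdsWithin π (Set.Iio π)) (nhds (lam - a)))
    (hright' : Tendsto (fun θ : ℝ => (Θ' θ + π) / (θ - π))
      (nhdsWithin π (Set.Iio π)) (nhds (lam' - a))) :
    lam' = lam := by
  set F : ℝ → ℝ → ℝ := fun θ y =>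
    -2*a*Real.cos θ*Real.cos y + 2*(a*E*Real.sin θ - (1/2)/Real.sin θ)*Real.sin y with hF
  have hodeF : ∀ θ ∈ Set.Ioo (0 : ℝ) π, HasDerivAt Θ (F θ (Θ θ) + 2*lam) θ := hode
  have hodeF' : ∀ θ ∈ Set.Ioo (0 : ℝ) π, HasDerivAt Θ' (F θ (Θ' θ) + 2*lam') θ := hode'
  rcases lt_trichotomy lam lam' with h | h | h
  · exact (aux_comparison a lam lam' h F Θ Θ' hodeF hodeF' hleft hleft' hright hright').elim
  · exact h.symm
  · exact (aux_comparison a lam' lam h F Θ' Θ hodeF' hodeF hleft' hleft hright' hright).elim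
end

section
/- Decay of the radial amplitude: Suppose Ω : ℝ → ℝ is continuous with lim_{r→+∞} Ω(r) = -arccos(E) and lim_{r→-∞} Ω(r) = -π + arccos(E) for some E ∈ [0,1), and R : ℝ → (0,∞) solves d(ln R)/dr = (r/√(r²+a²))·sin Ω(r) - (λ/√(r²+a²))·cos Ω(r) with a > 0, λ ∈ ℝ. Then for every ε ∈ (0, √(1-E²)) there exist C > 0 such that R(r) ≤ C·e^{-(√(1-E²) - ε)|r|} for all r; in particular R ∈ L^p(ℝ) for every p ≥ 1. -/
open Real Filter MeasureTheory

lemma aux_exp_int {d : ℝ} (hd : 0 < d) :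
    Integrable (fun r : ℝ => Real.exp (-d * |r|)) := by
  have h1 : IntegrableOn (fun r : ℝ => Real.exp (-d * |r|)) (Set.Ici 0) := by
    rw [integrableOn_Ici_iff_integrableOn_Ioi]
    exact (exp_neg_integrableOn_Ioi 0 hd).congr_fun
      (fun x hx => by simp [abs_of_pos (Set.mem_Ioi.mp hx)]) measurableSet_Ioi
  have h3 := (h1.integrable_indicator measurableSet_Ici).comp_neg
  have heq : (fun x : ℝ => Set.indicator (Set.Ici 0)
      (fun r => Real.exp (-d * |r|)) (-x))
      = Set.indicator (Set.Iic 0) (fun r => Real.exp (-d * |r|)) := by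
    funext x
    by_cases hx : x ≤ 0 <;>
      simp [Set.indicator, hx, neg_nonneg, abs_neg, not_le.mpr, Set.mem_Ici, Set.mem_Iic]
  rw [heq] at h3
  have h2 : IntegrableOn (fun r : ℝ => Real.exp (-d * |r|)) (Set.Iic 0) :=
    (integrable_indicator_iff measurableSet_Iic).mp h3
  rw [← integrableOn_univ, ← Set.Iic_union_Ici (a := (0:ℝ))]
  exact h2.union h1

lemma aux_frac_top (a : ℝ) (ha : 0 < a) :
    Tendsto (fun r : ℝ => r / Real.sqrt (r ^ 2 + a ^ 2)) atTop (nhds 1) := by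
  have hsq : Tendsto (fun r : ℝ => r ^ 2 + a ^ 2) atTop atTop :=
    tendsto_atTop_add_const_right _ _ (tendsto_pow_atTop two_ne_zero)
  have hd : Tendsto (fun r : ℝ => a ^ 2 / (r ^ 2 + a ^ 2)) atTop (nhds 0) :=
    tendsto_const_nhds.div_atTop hsq
  have key : Tendsto (fun r : ℝ => Real.sqrt (1 - a ^ 2 / (r ^ 2 + a ^ 2))) atTop (nhds 1) := by
    have h0 : Tendsto (fun r : ℝ => 1 - a ^ 2 / (r ^ 2 + a ^ 2)) atTop (nhds 1) := by
      simpa using tendsto_const_nhds.sub hd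
    have := (Real.continuous_sqrt.tendsto (1:ℝ)).comp h0
    simpa [Function.comp_def] using this
  apply key.congr'
  filter_upwards [eventually_gt_atTop (0:ℝ)] with r hr
  have hpos : (0:ℝ) < r ^ 2 + a ^ 2 := by positivity
  rw [show 1 - a ^ 2 / (r ^ 2 + a ^ 2) = r ^ 2 / (r ^ 2 + a ^ 2) by field_simp; ring,
    Real.sqrt_div (sq_nonneg r), Real.sqrt_sq hr.le]

lemma aux_frac_bot (a : ℝ) (ha : 0 < a) :
    Tendsto (fun r : ℝ => r / Real.sqrt (r ^ 2 + a ^ 2)) atBot (nhds (-1)) := by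
  have := (aux_frac_top a ha).comp tendsto_neg_atBot_atTop
  have h2 : Tendsto (fun r : ℝ => -(r / Real.sqrt (r ^ 2 + a ^ 2))) atBot (nhds 1) := by
    apply this.congr
    intro r
    simp [Function.comp, neg_div]
  have := h2.neg
  simpa using this

/-- Decay of the radial amplitude: if `Ω` is continuous with
`Ω(r) → -arccos E` as `r → +∞` and `Ω(r) → -π + arccos E` as `r → -∞` for some
`E ∈ [0,1)`, and `R > 0` solves
`d(ln R)/dr = (r/√(r²+a²))·sin Ω(r) - (λ/√(r²+a²))·cos Ω(r)` with `a > 0`,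
then for every `ε ∈ (0, √(1-E²))` there is `C > 0` with
`R(r) ≤ C·e^{-(√(1-E²)-ε)|r|}` for all `r`; in particular `R ∈ Lᵖ(ℝ)` for all `p ≥ 1`. -/
theorem radial_amplitude_decay
    (a lam E : ℝ) (ha : 0 < a) (hE : E ∈ Set.Ico (0 : ℝ) 1)
    (Ω : ℝ → ℝ) (hΩcont : Continuous Ω)
    (hΩtop : Tendsto Ω atTop (nhds (-Real.arccos E)))
    (hΩbot : Tendsto Ω atBot (nhds (-π + Real.arccos E)))
    (R : ℝ → ℝ) (hRpos : ∀ r : ℝ, 0 < R r) (hRcont : Continuous R)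
    (hode : ∀ r : ℝ, HasDerivAt (fun r' : ℝ => Real.log (R r'))
      ((r / Real.sqrt (r ^ 2 + a ^ 2)) * Real.sin (Ω r)
        - (lam / Real.sqrt (r ^ 2 + a ^ 2)) * Real.cos (Ω r)) r) :
    (∀ ε ∈ Set.Ioo (0 : ℝ) (Real.sqrt (1 - E ^ 2)), ∃ C : ℝ, 0 < C ∧
      ∀ r : ℝ, R r ≤ C * Real.exp (-(Real.sqrt (1 - E ^ 2) - ε) * |r|))
    ∧ (∀ p : ℝ, 1 ≤ p → Integrable (fun r : ℝ => R r ^ p)) := by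
  set s := Real.sqrt (1 - E ^ 2) with hs_def
  have hE2 : E ^ 2 < 1 := by
    have := hE.1; have := hE.2; nlinarith
  have hs : 0 < s := Real.sqrt_pos.mpr (by linarith)
  set g : ℝ → ℝ := fun r => (r / Real.sqrt (r ^ 2 + a ^ 2)) * Real.sin (Ω r)
      - (lam / Real.sqrt (r ^ 2 + a ^ 2)) * Real.cos (Ω r) with hg_def
  -- √(r²+a²) → ∞ at both ends
  have hsqrt_top : Tendsto (fun r : ℝ => Real.sqrt (r ^ 2 + a ^ 2)) atTop atTop := by
    apply tendsto_atTop_mono (fun r => ?_) tendsto_id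
    calc (id r : ℝ) ≤ |r| := le_abs_self r
    _ = Real.sqrt (r ^ 2) := (Real.sqrt_sq_eq_abs r).symm
    _ ≤ Real.sqrt (r ^ 2 + a ^ 2) := Real.sqrt_le_sqrt (by nlinarith)
  have hsqrt_bot : Tendsto (fun r : ℝ => Real.sqrt (r ^ 2 + a ^ 2)) atBot atTop := by
    apply tendsto_atTop_mono (fun r => ?_) tendsto_neg_atBot_atTop
    calc -r ≤ |r| := neg_le_abs r
    _ = Real.sqrt (r ^ 2) := (Real.sqrt_sq_eq_abs r).symm
    _ ≤ Real.sqrt (r ^ 2 + a ^ 2) := Real.sqrt_le_sqrt (by nlinarith)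
  have hlam_top : Tendsto (fun r : ℝ => lam / Real.sqrt (r ^ 2 + a ^ 2)) atTop (nhds 0) :=
    tendsto_const_nhds.div_atTop hsqrt_top
  have hlam_bot : Tendsto (fun r : ℝ => lam / Real.sqrt (r ^ 2 + a ^ 2)) atBot (nhds 0) :=
    tendsto_const_nhds.div_atTop hsqrt_bot
  have hsin_top : Tendsto (fun r => Real.sin (Ω r)) atTop (nhds (-s)) := by
    have := (Real.continuous_sin.tendsto _).comp hΩtop
    simpa [Function.comp_def, Real.sin_arccos, hs_def] using this
  have hcos_top : Tendsto (fun r => Real.cos (Ω r)) atTop (nhds E) := by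
    have := (Real.continuous_cos.tendsto _).comp hΩtop
    simpa [Function.comp_def, Real.cos_arccos (by linarith [hE.1] : (-1:ℝ) ≤ E) hE.2.le] using this
  have hsin_bot : Tendsto (fun r => Real.sin (Ω r)) atBot (nhds (-s)) := by
    have := (Real.continuous_sin.tendsto _).comp hΩbot
    have heq : Real.sin (-π + Real.arccos E) = -s := by
      rw [show -π + Real.arccos E = -(π - Real.arccos E) by ring, Real.sin_neg,
        Real.sin_pi_sub, Real.sin_arccos]
    simpa [Function.comp_def, heq] using this
  have hcos_bot : Tendsto (fun r => Real.cos (Ω r)) atBot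
      (nhds (Real.cos (-π + Real.arccos E))) := (Real.continuous_cos.tendsto _).comp hΩbot
  have hgtop : Tendsto g atTop (nhds (-s)) := by
    have := ((aux_frac_top a ha).mul hsin_top).sub (hlam_top.mul hcos_top)
    simpa [hg_def] using this
  have hgbot : Tendsto g atBot (nhds s) := by
    have := ((aux_frac_bot a ha).mul hsin_bot).sub
      (hlam_bot.mul hcos_bot)
    simpa [hg_def] using this
  -- main decay estimate
  have main : ∀ ε ∈ Set.Ioo (0 : ℝ) s, ∃ C : ℝ, 0 < C ∧
      ∀ r : ℝ, R r ≤ C * Real.exp (-(s - ε) * |r|) := by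
    intro ε hε
    set b := s - ε with hb_def
    have hb : 0 < b := by simp [hb_def]; linarith [hε.2]
    have hbs : b < s := by simp [hb_def]; linarith [hε.1]
    obtain ⟨M₁, hM₁⟩ := eventually_atTop.mp (hgtop.eventually_lt_const (by linarith : -s < -b))
    obtain ⟨M₂, hM₂⟩ := eventually_atBot.mp (hgbot.eventually_const_lt (by linarith : b < s))
    set N := max M₁ (max (-M₂) 0) with hN_def
    have hN0 : (0:ℝ) ≤ N := le_max_of_le_right (le_max_right _ _)
    have hNM₁ : M₁ ≤ N := le_max_left _ _
    have hNM₂ : -N ≤ M₂ := by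
      have : -M₂ ≤ N := le_max_of_le_right (le_max_left _ _)
      linarith
    have hlogcont : Continuous (fun r => Real.log (R r)) :=
      hRcont.log (fun r => (hRpos r).ne')
    -- antitone on [N, ∞)
    have hF : ∀ x : ℝ, HasDerivAt (fun r => Real.log (R r) + b * r) (g x + b) x := by
      intro x
      exact (hode x).add (by simpa using (hasDerivAt_id x).const_mul b)
    have hFanti : AntitoneOn (fun r => Real.log (R r) + b * r) (Set.Ici N) := by
      apply antitoneOn_of_deriv_nonpos (convex_Ici N)
        (fun x _ => (hF x).continuousAt.continuousWithinAt)
        (fun x _ => (hF x).differentiableAt.differentiableWithinAt)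
      intro x hx
      rw [interior_Ici] at hx
      rw [(hF x).deriv]
      have := hM₁ x (le_of_lt (lt_of_le_of_lt hNM₁ hx))
      linarith
    have hG : ∀ x : ℝ, HasDerivAt (fun r => Real.log (R r) - b * r) (g x - b) x := by
      intro x
      exact (hode x).sub (by simpa using (hasDerivAt_id x).const_mul b)
    have hGmono : MonotoneOn (fun r => Real.log (R r) - b * r) (Set.Iic (-N)) := by
      apply monotoneOn_of_deriv_nonneg (convex_Iic (-N))
        (fun x _ => (hG x).continuousAt.continuousWithinAt)
        (fun x _ => (hG x).differentiableAt.differentiableWithinAt)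
      intro x hx
      rw [interior_Iic] at hx
      rw [(hG x).deriv]
      have := hM₂ x (le_of_lt (lt_of_lt_of_le hx hNM₂))
      linarith
    -- the constant
    have hφcont : Continuous (fun r => R r * Real.exp (b * |r|)) :=
      hRcont.mul (Real.continuous_exp.comp (continuous_const.mul continuous_abs))
    obtain ⟨c, hc, hcmax⟩ := isCompact_Icc.exists_isMaxOn
      (⟨0, by constructor <;> linarith⟩ : (Set.Icc (-N) N).Nonempty) hφcont.continuousOn
    refine ⟨R c * Real.exp (b * |c|),
      mul_pos (hRpos c) (Real.exp_pos _), fun r => ?_⟩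
    set C := R c * Real.exp (b * |c|) with hC_def
    have hmax : ∀ x ∈ Set.Icc (-N) N, R x * Real.exp (b * |x|) ≤ C := fun x hx => hcmax hx
    rw [show -(s - ε) * |r| = -(b * |r|) by rw [hb_def]; ring, Real.exp_neg,
      ← div_eq_mul_inv, le_div_iff₀ (Real.exp_pos _)]
    rcases le_total N r with hr1 | hr1
    · -- right tail
      have h1 : Real.log (R r) + b * r ≤ Real.log (R N) + b * N :=
        hFanti Set.self_mem_Ici (Set.mem_Ici.mpr hr1) hr1
      have habs : |r| = r := abs_of_nonneg (le_trans hN0 hr1)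
      calc R r * Real.exp (b * |r|)
          = Real.exp (Real.log (R r) + b * r) := by
            rw [Real.exp_add, Real.exp_log (hRpos r), habs]
        _ ≤ Real.exp (Real.log (R N) + b * N) := Real.exp_le_exp.mpr h1
        _ = R N * Real.exp (b * |N|) := by
            rw [Real.exp_add, Real.exp_log (hRpos N), abs_of_nonneg hN0]
        _ ≤ C := hmax N ⟨by linarith, le_refl N⟩
    rcases le_total r (-N) with hr2 | hr2
    · -- left tail
      have h1 : Real.log (R r) - b * r ≤ Real.log (R (-N)) - b * (-N) :=
        hGmono (Set.mem_Iic.mpr hr2) Set.self_mem_Iic hr2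
      have habs : |r| = -r := abs_of_nonpos (by linarith)
      calc R r * Real.exp (b * |r|)
          = Real.exp (Real.log (R r) - b * r) := by
            rw [habs, show b * -r = -(b * r) by ring, Real.exp_neg, Real.exp_sub,
              Real.exp_log (hRpos r), div_eq_mul_inv]
        _ ≤ Real.exp (Real.log (R (-N)) - b * (-N)) := Real.exp_le_exp.mpr h1
        _ = R (-N) * Real.exp (b * |(-N)|) := by
            rw [abs_neg, abs_of_nonneg hN0,
              show Real.log (R (-N)) - b * (-N) = Real.log (R (-N)) + b * N by ring,
              Real.exp_add, Real.exp_log (hRpos (-N))]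
        _ ≤ C := hmax (-N) ⟨le_refl _, by linarith⟩
    · -- middle
      exact hmax r ⟨hr2, hr1⟩
  refine ⟨main, fun p hp => ?_⟩
  have hp0 : 0 < p := lt_of_lt_of_le one_pos hp
  obtain ⟨C, hC, hCb⟩ := main (s / 2) ⟨half_pos hs, half_lt_self hs⟩
  have hss : s - s / 2 = s / 2 := by ring
  rw [hss] at hCb
  set d := p * (s / 2) with hd_def
  have hd : 0 < d := mul_pos hp0 (half_pos hs)
  have hint : Integrable (fun r : ℝ => C ^ p * Real.exp (-d * |r|)) :=
    (aux_exp_int hd).const_mul _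
  apply hint.mono'
  · exact (hRcont.rpow_const (fun r => Or.inl (hRpos r).ne')).aestronglyMeasurable
  · filter_upwards with r
    have h1 : R r ^ p ≤ (C * Real.exp (-(s / 2) * |r|)) ^ p :=
      Real.rpow_le_rpow (hRpos r).le (hCb r) hp0.le
    have h2 : (C * Real.exp (-(s / 2) * |r|)) ^ p = C ^ p * Real.exp (-d * |r|) := by
      rw [Real.mul_rpow hC.le (Real.exp_pos _).le,
        Real.rpow_def_of_pos (Real.exp_pos _), Real.log_exp]
      congr 1
      rw [hd_def]; ring
    rw [Real.norm_eq_abs, abs_of_nonneg (Real.rpow_nonneg (hRpos r).le p)]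
    rw [h2] at h1
    exact h1
end
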